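/- Let p > 1 and let h, a ≥ 0 be real numbers, and let M, N ≥ 1. Suppose F : Matrix (Fin M) (Fin N) ℝ → ℝ is a nonnegative function with F(0) = 0 satisfying, for all ξ, η, the Lipschitz condition |F(ξ) − F(η)| ≤ (h + F(ξ) + F(η) + ‖ξ‖^p + ‖η‖^p)^{(p−1)/p} · a^{1/p} · ‖ξ − η‖. Then for all ξ one has F(ξ) ≤ (p−1)·h + (p−1+a)·‖ξ‖^p. -/

import Mathlib

open Matrix

/-- The Frobenius norm of a real matrix: `‖ξ‖ = (tr(ξᵀξ))^(1/2)`. -/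
noncomputable def frobNorm {M N : ℕ} (ξ : Matrix (Fin M) (Fin N) ℝ) : ℝ :=
  Real.sqrt ((ξᵀ * ξ).trace)

/-- Inequality (2.8): the case `η = 0` of the growth bound derived from the
Lipschitz condition (2.5). -/
theorem growth_bound_at_zero {M N : ℕ} (hM : 1 ≤ M) (hN : 1 ≤ N)
    (p h a : ℝ) (hp : 1 < p) (hh : 0 ≤ h) (ha : 0 ≤ a)
    (F : Matrix (Fin M) (Fin N) ℝ → ℝ)
    (hFnonneg : ∀ ξ, 0 ≤ F ξ)
    (hF0 : F 0 = 0)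
    (hLip : ∀ ξ η : Matrix (Fin M) (Fin N) ℝ,
      |F ξ - F η| ≤
        (h + F ξ + F η + frobNorm ξ ^ p + frobNorm η ^ p) ^ ((p - 1) / p) *
          a ^ (1 / p) * frobNorm (ξ - η)) :
    ∀ ξ : Matrix (Fin M) (Fin N) ℝ,
      F ξ ≤ (p - 1) * h + (p - 1 + a) * frobNorm ξ ^ p := by
  intro ξ
  have hp0 : (0:ℝ) < p := by linarith
  have hpne : p ≠ 0 := ne_of_gt hp0
  have hfrob0 : frobNorm (0 : Matrix (Fin M) (Fin N) ℝ) = 0 := by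
    simp [frobNorm]
  have hr0 : (0:ℝ) ≤ frobNorm ξ := Real.sqrt_nonneg _
  set r := frobNorm ξ with hr
  have hrp : (0:ℝ) ≤ r ^ p := Real.rpow_nonneg hr0 p
  have h1 := hLip ξ 0
  rw [hF0, hfrob0, Real.zero_rpow hpne, sub_zero, sub_zero] at h1
  have habs : |F ξ| = F ξ := abs_of_nonneg (hFnonneg ξ)
  rw [habs] at h1
  -- h1 : F ξ ≤ (h + F ξ + 0 + r ^ p + 0) ^ ((p-1)/p) * a ^ (1/p) * r
  set X := h + F ξ + r ^ p with hX
  have hXnonneg : 0 ≤ X := add_nonneg (add_nonneg hh (hFnonneg ξ)) hrp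
  have hY : (0:ℝ) ≤ a * r ^ p := by positivity
  have hw1 : (0:ℝ) ≤ (p-1)/p := div_nonneg (by linarith) hp0.le
  have hw2 : (0:ℝ) ≤ 1/p := div_nonneg zero_le_one hp0.le
  have hwsum : (p-1)/p + 1/p = 1 := by field_simp; ring
  have young := Real.geom_mean_le_arith_mean2_weighted hw1 hw2 hXnonneg hY hwsum
  have hpow : (a * r ^ p) ^ (1/p) = a ^ (1/p) * r := by
    rw [Real.mul_rpow ha hrp, ← Real.rpow_mul hr0, mul_one_div_cancel hpne, Real.rpow_one]
  rw [hpow] at young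
  have h2 : F ξ ≤ (p-1)/p * X + 1/p * (a * r ^ p) := by
    calc F ξ ≤ (h + F ξ + 0 + r ^ p + 0) ^ ((p-1)/p) * a ^ (1/p) * r := h1
    _ = X ^ ((p-1)/p) * (a ^ (1/p) * r) := by rw [hX]; ring_nf
    _ ≤ (p-1)/p * X + 1/p * (a * r ^ p) := young
  have h3 : F ξ * p ≤ (p-1) * X + a * r ^ p := by
    have := mul_le_mul_of_nonneg_right h2 (le_of_lt hp0)
    calc F ξ * p ≤ ((p-1)/p * X + 1/p * (a * r ^ p)) * p := this
    _ = (p-1) * X + a * r ^ p := by field_simp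
  rw [hX] at h3
  nlinarith [hFnonneg ξ, hrp]
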